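/- Let G be a finite group, p a prime, and let A be a subgroup of maximum order among the self-centralizing subgroups of G. Suppose |G : A| = p^2, |G : Z(G)| = p^i with i > 4, and G possesses no subgroup T with |G : T| = p and |G : Z(T)| = p^3. Then CD(G) = {A}. -/

import Mathlib

/-- The Chermak-Delgado measure of a subgroup `H` of `G`: `|H| · |C_G(H)|`. -/
noncomputable def cdMeasure (G : Type*) [Group G] (H : Subgroup G) : ℕ :=
  Nat.card H * Nat.card (Subgroup.centralizer (H : Set G))

/-- The Chermak-Delgado lattice of `G`: the set of subgroups whose
Chermak-Delgado measure is maximal. -/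
def CD (G : Type*) [Group G] : Set (Subgroup G) :=
  {H : Subgroup G | ∀ K : Subgroup G, cdMeasure G K ≤ cdMeasure G H}

/-- The center of a subgroup `T` of `G`, regarded as a subgroup of `G`. -/
def centerIn {G : Type*} [Group G] (T : Subgroup G) : Subgroup G :=
  (Subgroup.center T).map T.subtype

open Subgroup

section Aux
variable {G : Type*} [Group G] [Finite G]

set_option linter.unusedSectionVars false



lemma cancel_le {a b x y n : ℕ} (ha : a * x = n) (hb : b * y = n) (hn : 0 < n)
    (hxy : x ≤ y) : b ≤ a := by
  have hy : 0 < y := by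
    rcases Nat.eq_zero_or_pos y with h | h
    · subst h; simp at hb; omega
    · exact h
  have h1 : b * y ≤ a * y := by
    rw [hb, ← ha]; exact Nat.mul_le_mul_left a hxy
  exact Nat.le_of_mul_le_mul_right h1 hy

lemma cancel_le' {a b x y n : ℕ} (ha : a * x = n) (hb : b * y = n) (hn : 0 < n)
    (hab : a ≤ b) : y ≤ x := by
  have hbpos : 0 < b := by
    rcases Nat.eq_zero_or_pos b with h | h
    · subst h; simp at hb; omega
    · exact h
  have h1 : b * y ≤ b * x := by
    calc b * y = a * x := by rw [ha, hb]
      _ ≤ b * x := Nat.mul_le_mul_right x hab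
  exact Nat.le_of_mul_le_mul_left h1 hbpos

lemma cds_centralizer_sup (H K : Subgroup G) :
    centralizer ((H ⊔ K : Subgroup G) : Set G) = centralizer (H : Set G) ⊓ centralizer (K : Set G) := by
  apply le_antisymm
  · exact le_inf (centralizer_le (SetLike.coe_subset_coe.mpr le_sup_left))
      (centralizer_le (SetLike.coe_subset_coe.mpr le_sup_right))
  · rw [← le_centralizer_iff]
    exact sup_le
      (le_trans (le_centralizer_iff.mp le_rfl) (centralizer_le (SetLike.coe_subset_coe.mpr inf_le_left)))
      (le_trans (le_centralizer_iff.mp le_rfl) (centralizer_le (SetLike.coe_subset_coe.mpr inf_le_right)))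

lemma cds_index_inf_sup_le (H K : Subgroup G) :
    (H ⊓ K).index * (H ⊔ K).index ≤ H.index * K.index := by
  have h1 := Subgroup.relIndex_inf_le (H := H) (K := K) (L := H ⊔ K)
  have h2 := Subgroup.relIndex_mul_index (le_sup_left : H ≤ H ⊔ K)
  have h3 := Subgroup.relIndex_mul_index (le_sup_right : K ≤ H ⊔ K)
  have h4 := Subgroup.relIndex_mul_index (show H ⊓ K ≤ H ⊔ K from le_trans inf_le_left le_sup_left)
  calc (H ⊓ K).index * (H ⊔ K).index
      = (H ⊓ K).relIndex (H ⊔ K) * (H ⊔ K).index * (H ⊔ K).index := by rw [h4]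
    _ ≤ H.relIndex (H ⊔ K) * K.relIndex (H ⊔ K) * (H ⊔ K).index * (H ⊔ K).index := by
        exact Nat.mul_le_mul_right _ (Nat.mul_le_mul_right _ h1)
    _ = (H.relIndex (H ⊔ K) * (H ⊔ K).index) * (K.relIndex (H ⊔ K) * (H ⊔ K).index) := by ring
    _ = H.index * K.index := by rw [h2, h3]


lemma cds_cdMeasure_pos (H : Subgroup G) : 0 < cdMeasure G H :=
  Nat.mul_pos Nat.card_pos Nat.card_pos

lemma cds_cd_index (H : Subgroup G) :
    cdMeasure G H * (H.index * (centralizer (H : Set G)).index) = Nat.card G * Nat.card G := by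
  unfold cdMeasure
  rw [mul_mul_mul_comm, Subgroup.card_mul_index, Subgroup.card_mul_index]

lemma cds_card_mul_card_le (H K : Subgroup G) :
    Nat.card H * Nat.card K ≤ Nat.card (H ⊓ K : Subgroup G) * Nat.card (H ⊔ K : Subgroup G) := by
  have ha : (Nat.card (H ⊓ K : Subgroup G) * Nat.card (H ⊔ K : Subgroup G)) *
      ((H ⊓ K).index * (H ⊔ K).index) = Nat.card G * Nat.card G := by
    rw [mul_mul_mul_comm, Subgroup.card_mul_index, Subgroup.card_mul_index]
  have hb : (Nat.card H * Nat.card K) * (H.index * K.index) = Nat.card G * Nat.card G := by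
    rw [mul_mul_mul_comm, Subgroup.card_mul_index, Subgroup.card_mul_index]
  exact cancel_le ha hb (Nat.mul_pos Nat.card_pos Nat.card_pos) (cds_index_inf_sup_le H K)

lemma cds_cent_card_le (H K : Subgroup G) :
    Nat.card (centralizer (H : Set G)) * Nat.card (centralizer (K : Set G)) ≤
      Nat.card (centralizer (((H ⊓ K : Subgroup G) : Subgroup G) : Set G)) *
        Nat.card (centralizer (((H ⊔ K : Subgroup G) : Subgroup G) : Set G)) := by
  have hsub : centralizer (H : Set G) ⊔ centralizer (K : Set G) ≤
      centralizer (((H ⊓ K : Subgroup G) : Subgroup G) : Set G) :=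
    sup_le (centralizer_le (SetLike.coe_subset_coe.mpr inf_le_left))
      (centralizer_le (SetLike.coe_subset_coe.mpr inf_le_right))
  calc Nat.card (centralizer (H : Set G)) * Nat.card (centralizer (K : Set G))
      ≤ Nat.card (centralizer (H : Set G) ⊓ centralizer (K : Set G) : Subgroup G) *
        Nat.card (centralizer (H : Set G) ⊔ centralizer (K : Set G) : Subgroup G) :=
        cds_card_mul_card_le _ _
    _ = Nat.card (centralizer (((H ⊔ K : Subgroup G) : Subgroup G) : Set G)) *
        Nat.card (centralizer (H : Set G) ⊔ centralizer (K : Set G) : Subgroup G) := by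
        rw [cds_centralizer_sup]
    _ ≤ Nat.card (centralizer (((H ⊔ K : Subgroup G) : Subgroup G) : Set G)) *
        Nat.card (centralizer (((H ⊓ K : Subgroup G) : Subgroup G) : Set G)) :=
        Nat.mul_le_mul_left _ (Subgroup.card_le_of_le hsub)
    _ = _ := Nat.mul_comm _ _

lemma cds_sup_mem_CD {H K : Subgroup G} (hH : H ∈ CD G) (hK : K ∈ CD G) :
    H ⊔ K ∈ CD G ∧ cdMeasure G (H ⊔ K) = cdMeasure G H := by
  have hKH : cdMeasure G K = cdMeasure G H := le_antisymm (hH K) (hK H)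
  have key : cdMeasure G H * cdMeasure G K ≤ cdMeasure G (H ⊓ K) * cdMeasure G (H ⊔ K) := by
    unfold cdMeasure
    calc Nat.card H * Nat.card (centralizer (H : Set G)) *
          (Nat.card K * Nat.card (centralizer (K : Set G)))
        = Nat.card H * Nat.card K *
          (Nat.card (centralizer (H : Set G)) * Nat.card (centralizer (K : Set G))) := by ring
      _ ≤ (Nat.card (H ⊓ K : Subgroup G) * Nat.card (H ⊔ K : Subgroup G)) *
          (Nat.card (centralizer (((H ⊓ K : Subgroup G) : Subgroup G) : Set G)) *
            Nat.card (centralizer (((H ⊔ K : Subgroup G) : Subgroup G) : Set G))) :=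
          Nat.mul_le_mul (cds_card_mul_card_le H K) (cds_cent_card_le H K)
      _ = _ := by ring
  rw [hKH] at key
  have h1 : cdMeasure G (H ⊓ K) ≤ cdMeasure G H := hH _
  have h2 : cdMeasure G (H ⊔ K) ≤ cdMeasure G H := hH _
  have hsup : cdMeasure G (H ⊔ K) = cdMeasure G H := by
    refine le_antisymm h2 ?_
    have h3 : cdMeasure G H * cdMeasure G H ≤ cdMeasure G H * cdMeasure G (H ⊔ K) := by
      calc cdMeasure G H * cdMeasure G H ≤ cdMeasure G (H ⊓ K) * cdMeasure G (H ⊔ K) := key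
        _ ≤ cdMeasure G H * cdMeasure G (H ⊔ K) := Nat.mul_le_mul_right _ h1
    exact Nat.le_of_mul_le_mul_left h3 (cds_cdMeasure_pos H)
  exact ⟨fun L => (hH L).trans hsup.symm.le, hsup⟩

lemma cds_cent_mem_CD {K : Subgroup G} (hK : K ∈ CD G) :
    centralizer (K : Set G) ∈ CD G ∧
      centralizer ((centralizer (K : Set G) : Subgroup G) : Set G) = K := by
  have hle : K ≤ centralizer ((centralizer (K : Set G) : Subgroup G) : Set G) :=
    le_centralizer_iff.mp le_rfl
  have h1 : cdMeasure G K ≤ cdMeasure G (centralizer (K : Set G)) := by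
    unfold cdMeasure
    rw [mul_comm (Nat.card K)]
    exact Nat.mul_le_mul_left _ (Subgroup.card_le_of_le hle)
  have heq : cdMeasure G (centralizer (K : Set G)) = cdMeasure G K :=
    le_antisymm (hK _) h1
  refine ⟨fun L => (hK L).trans h1, ?_⟩
  unfold cdMeasure at heq
  rw [mul_comm (Nat.card K)] at heq
  have hcard : Nat.card (centralizer ((centralizer (K : Set G) : Subgroup G) : Set G)) ≤
      Nat.card K :=
    Nat.le_of_mul_le_mul_left heq.le Nat.card_pos
  exact (Subgroup.eq_of_le_of_card_ge hle hcard).symm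

lemma cds_centerIn_eq (T : Subgroup G) :
    centerIn T = T ⊓ centralizer (T : Set G) := by
  ext x
  simp only [centerIn, Subgroup.mem_map, Subgroup.mem_inf, mem_centralizer_iff]
  constructor
  · rintro ⟨⟨y, hy⟩, hyc, rfl⟩
    refine ⟨hy, fun h hh => ?_⟩
    exact congrArg Subtype.val (Subgroup.mem_center_iff.mp hyc ⟨h, hh⟩)
  · rintro ⟨hxT, hc⟩
    exact ⟨⟨x, hxT⟩, Subgroup.mem_center_iff.mpr fun z => Subtype.ext (hc z z.2), rfl⟩

lemma cds_centerIn_le (T : Subgroup G) : centerIn T ≤ T := by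
  rw [cds_centerIn_eq]; exact inf_le_left

lemma cds_centerIn_index (T : Subgroup G) :
    (Subgroup.center T).index * T.index = (centerIn T).index := by
  have h1 : (centerIn T).subgroupOf T = Subgroup.center T := by
    unfold centerIn Subgroup.subgroupOf
    exact Subgroup.comap_map_eq_self_of_injective T.subtype_injective _
  have := Subgroup.relIndex_mul_index (cds_centerIn_le T)
  rwa [Subgroup.relIndex, h1] at this

lemma cds_eq_of_le_of_index_eq {H K : Subgroup G} (hle : H ≤ K) (h : H.index = K.index) :
    H = K := by
  refine Subgroup.eq_of_le_of_card_ge hle ?_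
  have hK := Subgroup.card_mul_index K
  have hH := Subgroup.card_mul_index H
  rw [h] at hH
  have : K.index ≠ 0 := Subgroup.index_ne_zero_of_finite
  exact Nat.le_of_mul_le_mul_right (by rw [hK, hH]) (Nat.pos_of_ne_zero this)


lemma cds_key_step {G : Type*} [Group G] [Finite G] (p : ℕ) (hp : p.Prime)
    (A : Subgroup G) (hA : Subgroup.centralizer (A : Set G) = A)
    (hAmax : ∀ B : Subgroup G, Subgroup.centralizer (B : Set G) = B →
      Nat.card B ≤ Nat.card A)
    (hiA : A.index = p ^ 2) (i : ℕ) (hi : 4 < i)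
    (hZ : (Subgroup.center G).index = p ^ i)
    (hnoT : ¬ ∃ T : Subgroup G, T.index = p ∧ (centerIn T).index = p ^ 3)
    {K : Subgroup G} (hK : K ∈ CD G) : K = A := by
  obtain ⟨hCK_mem, hCCK⟩ := cds_cent_mem_CD hK
  obtain ⟨hM_mem, hMmeas⟩ := cds_sup_mem_CD hK hCK_mem
  set CK := centralizer (K : Set G) with hCKdef
  set M := K ⊔ CK with hMdef
  have hCM : centralizer (M : Set G) = K ⊓ CK := by
    rw [hMdef, cds_centralizer_sup, ← hCKdef, hCCK, inf_comm]
  have hinfle : K ⊓ CK ≤ M := le_trans inf_le_left le_sup_left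
  have hZle : Subgroup.center G ≤ K ⊓ CK := hCM ▸ Subgroup.center_le_centralizer (M : Set G)
  have hdvd1 : (K ⊓ CK).index ∣ p ^ i := hZ ▸ Subgroup.index_dvd_of_le hZle
  obtain ⟨b, hbi, hb⟩ := (Nat.dvd_prime_pow hp).mp hdvd1
  have hdvd2 : M.index ∣ p ^ i := (Subgroup.index_dvd_of_le hinfle).trans hdvd1
  obtain ⟨a, hai, ha⟩ := (Nat.dvd_prime_pow hp).mp hdvd2
  have hab : a ≤ b := by
    have h := Subgroup.index_dvd_of_le hinfle
    rw [ha, hb] at h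
    exact (Nat.pow_dvd_pow_iff_le_right hp.one_lt).mp h
  have hmA : cdMeasure G A = Nat.card A * Nat.card A := by unfold cdMeasure; rw [hA]
  have hA_idx : cdMeasure G A * (p ^ 2 * p ^ 2) = Nat.card G * Nat.card G := by
    have h := cds_cd_index A; rwa [hA, hiA] at h
  have hM_idx : cdMeasure G M * (p ^ a * p ^ b) = Nat.card G * Nat.card G := by
    have h := cds_cd_index M; rwa [hCM, ha, hb] at h
  have hn2 : 0 < Nat.card G * Nat.card G := Nat.mul_pos Nat.card_pos Nat.card_pos
  have hmAle : cdMeasure G A ≤ cdMeasure G M := hM_mem A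
  have hple : p ^ a * p ^ b ≤ p ^ 2 * p ^ 2 := cancel_le' hA_idx hM_idx hn2 hmAle
  have hab4 : a + b ≤ 4 := by
    rw [← pow_add, ← pow_add] at hple
    exact (Nat.pow_le_pow_iff_right hp.one_lt).mp hple
  rcases Nat.eq_zero_or_pos a with ha0 | hapos
  · -- M = ⊤, so K ⊓ CK = center G with small index : contradiction with i > 4
    exfalso
    subst ha0
    have hMtop : M = ⊤ := Subgroup.index_eq_one.mp (by rw [ha, pow_zero])
    have hKCKZ : K ⊓ CK = Subgroup.center G := by
      rw [← hCM, hMtop]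
      rw [show ((⊤ : Subgroup G) : Set G) = (Set.univ : Set G) from Subgroup.coe_top]
      exact Subgroup.centralizer_univ
    have hbieq : p ^ b = p ^ i := by rw [← hb, hKCKZ, hZ]
    have : b = i := Nat.pow_right_injective hp.two_le hbieq
    omega
  have hcenterIn : centerIn M = K ⊓ CK := by
    rw [cds_centerIn_eq, hCM]
    exact inf_eq_right.mpr hinfle
  have hMeq : M = K ⊓ CK → centralizer (K : Set G) = K ∧ K = M := by
    intro h
    have h1 : K ≤ CK := le_trans (le_trans le_sup_left h.le) inf_le_right
    have h2 : CK ≤ K := le_trans (le_trans le_sup_right h.le) inf_le_left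
    have h3 : CK = K := le_antisymm h2 h1
    exact ⟨h3, le_antisymm le_sup_left (by rw [h]; exact inf_le_left)⟩
  have ha2 : a ≤ 2 := by omega
  have hb3 : b ≤ 3 := by omega
  have ha1 : 1 ≤ a := hapos
  -- the self-centralizing / equal-cardinality case (a = b = 2)
  have main22 : a = 2 → b = 2 → K = A := by
    intro ha2' hb2'
    have hMK : K ⊓ CK = M := cds_eq_of_le_of_index_eq hinfle (by rw [hb, ha, ha2', hb2'])
    obtain ⟨hself, hKM⟩ := hMeq hMK.symm
    have hcardle : Nat.card K ≤ Nat.card A := hAmax K hself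
    have hmK : cdMeasure G K = Nat.card K * Nat.card K := by
      unfold cdMeasure; rw [hself]
    have hcard_eq : Nat.card K = Nat.card A := by
      refine le_antisymm hcardle ?_
      by_contra hlt
      push_neg at hlt
      have h1 : Nat.card K * Nat.card K < Nat.card A * Nat.card A :=
        Nat.mul_lt_mul'' hlt hlt
      have h2 := hK A
      rw [hmA, hmK] at h2
      omega
    have hA_mem : A ∈ CD G := by
      intro L
      have h := hK L
      rwa [hmK, hcard_eq, ← hmA] at h
    by_cases hKA : K = A
    · exact hKA
    exfalso
    obtain ⟨hJ_mem, hJmeas⟩ := cds_sup_mem_CD hK hA_mem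
    set J := K ⊔ A with hJdef
    have hCJ : centralizer (J : Set G) = K ⊓ A := by
      rw [hJdef, cds_centralizer_sup, hself, hA]
    have hJd : J.index ∣ p ^ 2 := hiA ▸ Subgroup.index_dvd_of_le le_sup_right
    obtain ⟨c, hc2, hcJ⟩ := (Nat.dvd_prime_pow hp).mp hJd
    have hcne2 : c ≠ 2 := by
      intro h; subst h
      have hAJ : A = J := cds_eq_of_le_of_index_eq le_sup_right (by rw [hiA, hcJ])
      have hKle : K ≤ A := hAJ ▸ le_sup_left
      exact hKA (Subgroup.eq_of_le_of_card_ge hKle hcard_eq.ge)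
    have hmJ : cdMeasure G J = Nat.card A * Nat.card A := by
      rw [hJmeas, hmK, hcard_eq]
    have hJ_idx := cds_cd_index J
    rw [hCJ, hmJ, hcJ] at hJ_idx
    have hA_idx' : (Nat.card A * Nat.card A) * (p ^ 2 * p ^ 2) =
        Nat.card G * Nat.card G := by rw [← hmA]; exact hA_idx
    have hcancel : p ^ c * (K ⊓ A).index = p ^ 2 * p ^ 2 :=
      Nat.eq_of_mul_eq_mul_left (Nat.mul_pos Nat.card_pos Nat.card_pos)
        (by rw [hJ_idx, hA_idx'])
    have hc1 : c ≤ 1 := by omega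
    interval_cases c
    · -- c = 0 : J = ⊤, K ⊓ A = center G, index p^i = p^4
      have hJtop : J = ⊤ := Subgroup.index_eq_one.mp (by rw [hcJ, pow_zero])
      have hKAZ : K ⊓ A = Subgroup.center G := by
        rw [← hCJ, hJtop]
        rw [show ((⊤ : Subgroup G) : Set G) = (Set.univ : Set G) from Subgroup.coe_top]
        exact Subgroup.centralizer_univ
      rw [pow_zero, one_mul, hKAZ, hZ] at hcancel
      have h10 : p ^ i = p ^ 4 := by rw [hcancel]; ring
      have : i = 4 := Nat.pow_right_injective hp.two_le h10
      omega
    · -- c = 1 : T = J contradicts hnoT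
      have hKAidx : (K ⊓ A).index = p ^ 3 := by
        have h5 : p ^ 1 * (K ⊓ A).index = p ^ 1 * p ^ 3 := by rw [hcancel]; ring
        exact Nat.eq_of_mul_eq_mul_left (pow_pos hp.pos 1) h5
      have hcenterInJ : centerIn J = K ⊓ A := by
        rw [cds_centerIn_eq, hCJ]
        exact inf_eq_right.mpr (le_trans inf_le_left le_sup_left)
      exact hnoT ⟨J, by rw [hcJ, pow_one], by rw [hcenterInJ, hKAidx]⟩
  interval_cases a
  · -- a = 1
    have hb1 : 1 ≤ b := by omega
    interval_cases b
    · -- b = 1 : K self-centralizing of index p, contradicts maximality of A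
      exfalso
      have hMK : K ⊓ CK = M := cds_eq_of_le_of_index_eq hinfle (by rw [hb, ha])
      obtain ⟨hself, hKM⟩ := hMeq hMK.symm
      have hKidx : K.index = p := by rw [hKM, ha, pow_one]
      have e1 : Nat.card K * p = Nat.card G := by
        rw [← hKidx]; exact Subgroup.card_mul_index K
      have e2 : Nat.card A * (p * p) = Nat.card G := by
        have h := Subgroup.card_mul_index A
        rw [hiA] at h
        rw [← h]; ring
      have hcard := hAmax K hself
      have h6 : Nat.card A * (p * p) ≤ Nat.card A * p := by
        rw [e2, ← e1]; exact Nat.mul_le_mul_right p hcard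
      have h7 : p * p ≤ p := Nat.le_of_mul_le_mul_left h6 Nat.card_pos
      have h8 : 2 * p ≤ p * p := Nat.mul_le_mul_right p hp.two_le
      have := hp.two_le
      omega
    · -- b = 2 : M/Z(M) of order p, M abelian, contradiction
      exfalso
      have hcZ : (Subgroup.center M).index * p ^ 1 = p ^ 2 := by
        have h := cds_centerIn_index M
        rw [hcenterIn, hb, ha] at h
        exact h
      have hcZp : (Subgroup.center M).index = p := by
        have h : (Subgroup.center M).index * p = p * p := by
          rw [pow_one] at hcZ; rw [hcZ]; ring
        exact Nat.eq_of_mul_eq_mul_right hp.pos h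
      haveI : Fact p.Prime := ⟨hp⟩
      have hcyc : IsCyclic (M ⧸ Subgroup.center M) := by
        apply isCyclic_of_prime_card (p := p)
        rw [← Subgroup.index_eq_card, hcZp]
      have hcomm : ∀ x y : M, x * y = y * x :=
        commutative_of_cyclic_center_quotient (QuotientGroup.mk' _)
          (le_of_eq (QuotientGroup.ker_mk' _))
      have hMle : M ≤ centralizer (M : Set G) := by
        intro g hg
        rw [mem_centralizer_iff]
        intro h hh
        exact congrArg Subtype.val (hcomm ⟨h, hh⟩ ⟨g, hg⟩)
      have hMeq2 : M = K ⊓ CK := le_antisymm (hCM ▸ hMle) hinfle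
      have h9 : p ^ 1 = p ^ 2 := by rw [← ha, ← hb, hMeq2]
      have := Nat.pow_right_injective hp.two_le h9
      omega
    · -- b = 3 : contradicts hnoT with T = M
      exact absurd ⟨M, by rw [ha, pow_one], by rw [hcenterIn, hb]⟩ hnoT
  · -- a = 2, then b = 2
    have hbb : b = 2 := by omega
    subst hbb
    exact main22 rfl rfl

end Aux

theorem stmt_7 (G : Type*) [Group G] [Finite G] (p : ℕ) (hp : p.Prime)
    (A : Subgroup G) (hA : Subgroup.centralizer (A : Set G) = A)
    (hAmax : ∀ B : Subgroup G, Subgroup.centralizer (B : Set G) = B →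
      Nat.card B ≤ Nat.card A)
    (hiA : A.index = p ^ 2) (i : ℕ) (hi : 4 < i)
    (hZ : (Subgroup.center G).index = p ^ i)
    (hnoT : ¬ ∃ T : Subgroup G, T.index = p ∧ (centerIn T).index = p ^ 3) :
    CD G = {A} := by
  obtain ⟨K₀, hK₀⟩ := Finite.exists_max (cdMeasure G)
  have hK₀mem : K₀ ∈ CD G := fun L => hK₀ L
  have hK₀A : K₀ = A := cds_key_step p hp A hA hAmax hiA i hi hZ hnoT hK₀mem
  ext L
  simp only [Set.mem_singleton_iff]
  constructor
  · intro hL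
    exact cds_key_step p hp A hA hAmax hiA i hi hZ hnoT hL
  · rintro rfl
    exact hK₀A ▸ hK₀mem
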